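/- Let (a,b) be a perplex parameter and suppose Δ = 0, where Δ := (a₁b₃ − a₃b₁)² − 4(a₁b₂ − a₂b₁)(a₂b₃ − a₃b₂). Then ℙ_{a,b} is isomorphic to the dual numbers ℝ[ε]/(ε²): there exists a real-linear equivalence φ : ℝ² → DualNumber ℝ such that φ(x * y) = φ(x)·φ(y) for all x, y ∈ ℝ². -/

import Mathlib

open Filter Topology

noncomputable section

/-- The perplex product on `ℝ²` determined by the parameters `a = (a₁,a₂,a₃)`,
`b = (b₁,b₂,b₃)`. -/
def pmul (a₁ a₂ a₃ b₁ b₂ b₃ : ℝ) (x y : ℝ × ℝ) : ℝ × ℝ :=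
  (a₁ * x.1 * y.1 + a₂ * (x.1 * y.2 + x.2 * y.1) + a₃ * x.2 * y.2,
   b₁ * x.1 * y.1 + b₂ * (x.1 * y.2 + x.2 * y.1) + b₃ * x.2 * y.2)

/-- `(a,b)` is a perplex parameter: conditions (i)-(iv). -/
def IsPerplexParam (a₁ a₂ a₃ b₁ b₂ b₃ : ℝ) : Prop :=
  a₁ * a₃ - a₂ ^ 2 ≠ 0 ∧ a₁ * b₂ - a₂ * b₁ ≠ 0 ∧
    a₂ * b₂ - a₃ * b₁ = 0 ∧ a₁ * a₃ - a₂ ^ 2 + a₂ * b₃ - a₃ * b₂ = 0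

set_option maxHeartbeats 1600000 in
/-- Classification, case `Δ = 0`: `ℙ_{a,b}` is isomorphic to the dual numbers
`ℝ[ε]/(ε²)`. -/
theorem perplex_iso_dual_of_discriminant_zero (a₁ a₂ a₃ b₁ b₂ b₃ : ℝ)
    (hp : IsPerplexParam a₁ a₂ a₃ b₁ b₂ b₃)
    (hΔ : (a₁ * b₃ - a₃ * b₁) ^ 2 -
        4 * (a₁ * b₂ - a₂ * b₁) * (a₂ * b₃ - a₃ * b₂) = 0) :
    ∃ φ : (ℝ × ℝ) ≃ₗ[ℝ] DualNumber ℝ, ∀ x y : ℝ × ℝ, φ (pmul a₁ a₂ a₃ b₁ b₂ b₃ x y) = φ x * φ y := by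
  obtain ⟨hd0, hD, hp3, hp4⟩ := hp
  -- derived identity (A): b₂² - b₁b₃ = a₁b₂ - a₂b₁
  have hA : b₂ ^ 2 - b₁ * b₃ - (a₁ * b₂ - a₂ * b₁) = 0 := by
    have key : (a₁ * a₃ - a₂ ^ 2) * (b₂ ^ 2 - b₁ * b₃ - (a₁ * b₂ - a₂ * b₁)) = 0 := by
      linear_combination (a₁ * b₃ - a₂ * b₂) * hp3 - (a₁ * b₂ - a₂ * b₁) * hp4
    exact (mul_eq_zero.mp key).resolve_left hd0
  -- the "trace" a₁ + b₂ is nonzero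
  have hs : a₁ + b₂ ≠ 0 := by
    intro hc
    have hb2 : b₂ = 0 := by
      have key : b₂ * (4 * (a₁ * a₃ - a₂ ^ 2) ^ 3) = 0 := by
        linear_combination
          (-(7:ℝ)*a₃^4*b₁^2 + a₂*a₃^2*b₁*b₃^2 - 2*a₂*a₃^3*b₁*b₂ - a₂^2*a₃*b₂*b₃^2 +
            16*a₂^2*a₃^2*b₂^2 - 3*a₂^2*a₃^2*b₁*b₃ - 4*a₂^3*a₃*b₂*b₃ - 4*a₂^3*a₃^2*b₁ +
            12*a₂^4*a₃*b₂ + a₁*a₃^3*b₁*b₃ - 2*a₁*a₂*a₃^2*b₂*b₃ + a₁*a₂^2*a₃*b₃^2 -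
            10*a₁*a₂^2*a₃^2*b₂ + 2*a₁^2*a₃^3*b₂) * hc +
          (-(7:ℝ)*a₃^3*b₁*b₂ + a₂*a₃*b₂*b₃^2 - 14*a₂*a₃^2*b₂^2 + 3*a₂^2*a₃*b₂*b₃ -
            a₂^2*a₃^2*b₁ - a₂^3*b₃^2 - 6*a₂^3*a₃*b₂ - 3*a₂^4*b₃ + a₁*a₃^2*b₂*b₃ -
            7*a₁*a₃^3*b₁ + a₁*a₂*a₃*b₃^2 - 4*a₁*a₂*a₃^2*b₂ - 2*a₁*a₂^2*a₃*b₃ -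
            4*a₁*a₂^3*a₃ + a₁^2*a₃^2*b₃) * hp3 +
          ((5:ℝ)*a₂*a₃^2*b₁*b₂ + 2*a₂^2*a₃*b₂^2 - a₂^2*a₃*b₁*b₃ + a₂^3*b₂*b₃ + 4*a₂^4*b₂ -
            a₁*a₂*a₃*b₂*b₃ + 2*a₁^2*a₃^2*b₂) * hp4 - a₂^2*a₃*hΔ
      rcases mul_eq_zero.mp key with h | h
      · exact h
      · have h3 : (a₁ * a₃ - a₂ ^ 2) ^ 3 = 0 := by linarith
        exact absurd ((pow_eq_zero_iff (by norm_num : (3:ℕ) ≠ 0)).mp h3) hd0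
    have key2 : (a₁ * b₂ - a₂ * b₁) * (4 * (a₁ * a₃ - a₂ ^ 2)) = 0 := by
      linear_combination
        (b₂*b₃^2 - 8*a₃*b₂^2 + 6*a₃*b₁*b₃ + 4*a₂*b₂*b₃ - 4*a₂*a₃*b₁ - 4*a₂^2*b₂ -
          a₁*b₃^2 + 4*a₁*a₃*b₂) * hc +
        ((3:ℝ)*b₂*b₃ + a₃*b₁ - 3*a₂*b₂ + 4*a₁*b₃ - 4*a₁*a₂) * hp3 +
        (-(7:ℝ)*b₂^2 - 4*a₂*b₁ - 4*a₁*b₂) * hp4 + hΔ +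
        (-b₂*b₃^2 + a₃*b₂^2 - 3*a₃*b₁*b₃ + 3*a₁*a₃*b₂ + 4*a₁^2*a₃) * hb2
    rcases mul_eq_zero.mp key2 with h | h
    · exact hD h
    · exact hd0 (by linarith)
  -- identity (C2): 2b₂D + b₁n₁ = sD
  have hC2 : 2 * b₂ * (a₁ * b₂ - a₂ * b₁) + b₁ * (a₃ * b₁ - a₁ * b₃) =
      (a₁ + b₂) * (a₁ * b₂ - a₂ * b₁) := by
    linear_combination -b₁ * hp3 + a₁ * hA
  have hEx : ∃ E : (ℝ × ℝ) ≃ₗ[ℝ] DualNumber ℝ,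
      (∀ z : DualNumber ℝ, E.symm z =
        (((a₁ + b₂) * b₂ * z.fst + (a₃ * b₁ - a₁ * b₃) * z.snd) /
            ((a₁ + b₂) * (a₁ * b₂ - a₂ * b₁)),
          (-((a₁ + b₂) * b₁ * z.fst) + 2 * (a₁ * b₂ - a₂ * b₁) * z.snd) /
            ((a₁ + b₂) * (a₁ * b₂ - a₂ * b₁)))) := by
    refine ⟨{
    toFun := fun x => (⟨(2 * (a₁ * b₂ - a₂ * b₁) * x.1 - (a₃ * b₁ - a₁ * b₃) * x.2) / (a₁ + b₂),
      b₁ * x.1 + b₂ * x.2⟩ : ℝ × ℝ)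
    map_add' := by
      intro p q
      show (_ : ℝ × ℝ) = (_ : ℝ × ℝ) + (_ : ℝ × ℝ)
      refine Prod.ext ?_ ?_ <;>
        simp <;> ring
    map_smul' := by
      intro c p
      show (_ : ℝ × ℝ) = (c : ℝ) • (_ : ℝ × ℝ)
      refine Prod.ext ?_ ?_ <;>
        simp [smul_eq_mul] <;> ring
    invFun := fun z =>
      (((a₁ + b₂) * b₂ * z.fst + (a₃ * b₁ - a₁ * b₃) * z.snd) /
          ((a₁ + b₂) * (a₁ * b₂ - a₂ * b₁)),
        (-((a₁ + b₂) * b₁ * z.fst) + 2 * (a₁ * b₂ - a₂ * b₁) * z.snd) /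
          ((a₁ + b₂) * (a₁ * b₂ - a₂ * b₁)))
    left_inv := by
      intro x
      have h1 : TrivSqZeroExt.fst (⟨(2 * (a₁ * b₂ - a₂ * b₁) * x.1 - (a₃ * b₁ - a₁ * b₃) * x.2) / (a₁ + b₂),
          b₁ * x.1 + b₂ * x.2⟩ : ℝ × ℝ) = (2 * (a₁ * b₂ - a₂ * b₁) * x.1 - (a₃ * b₁ - a₁ * b₃) * x.2) / (a₁ + b₂) := rfl
      have h2 : TrivSqZeroExt.snd (⟨(2 * (a₁ * b₂ - a₂ * b₁) * x.1 - (a₃ * b₁ - a₁ * b₃) * x.2) / (a₁ + b₂),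
          b₁ * x.1 + b₂ * x.2⟩ : ℝ × ℝ) = b₁ * x.1 + b₂ * x.2 := rfl
      refine Prod.ext ?_ ?_
      · simp only [h1, h2]
        field_simp
        ring_nf
        linear_combination x.1 * hC2
      · simp only [h1, h2]
        field_simp [show a₁ * b₂ - b₁ * a₂ ≠ 0 by rwa [mul_comm b₁ a₂]]
        ring_nf
        linear_combination x.2 * hC2
    right_inv := by
      intro z
      refine TrivSqZeroExt.ext ?_ ?_
      · simp only [TrivSqZeroExt.fst]
        field_simp
        ring_nf
        linear_combination (z.1 * (a₁ + b₂)) * hC2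
      · simp only [TrivSqZeroExt.snd]
        field_simp [show a₁ * b₂ - b₁ * a₂ ≠ 0 by rwa [mul_comm b₁ a₂]]
        ring_nf
        linear_combination z.2 * hC2
  }, fun z => rfl⟩
  obtain ⟨E, hEsymm⟩ := hEx
  have key : ∀ z w : DualNumber ℝ,
      pmul a₁ a₂ a₃ b₁ b₂ b₃ (E.symm z) (E.symm w) = E.symm (z * w) := by
    intro z w
    rw [hEsymm, hEsymm, hEsymm]
    have hf : (z * w).fst = z.fst * w.fst := TrivSqZeroExt.fst_mul z w
    have hsnd : (z * w).snd = z.fst * w.snd + w.fst * z.snd := by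
      simp [TrivSqZeroExt.snd_mul, smul_eq_mul]
      ring
    refine Prod.ext ?_ ?_
    · simp only [pmul]
      rw [hf, hsnd]
      have hS : ((a₁ + b₂) * (a₁ * b₂ - a₂ * b₁)) ≠ 0 := mul_ne_zero hs hD
      trans ((a₁ * (((a₁ + b₂) * b₂ * TrivSqZeroExt.fst z + (a₃ * b₁ - a₁ * b₃) * TrivSqZeroExt.snd z) * ((a₁ + b₂) * b₂ * TrivSqZeroExt.fst w + (a₃ * b₁ - a₁ * b₃) * TrivSqZeroExt.snd w)) + a₂ * (((a₁ + b₂) * b₂ * TrivSqZeroExt.fst z + (a₃ * b₁ - a₁ * b₃) * TrivSqZeroExt.snd z) * (-((a₁ + b₂) * b₁ * TrivSqZeroExt.fst w) + 2 * (a₁ * b₂ - a₂ * b₁) * TrivSqZeroExt.snd w) + (-((a₁ + b₂) * b₁ * TrivSqZeroExt.fst z) + 2 * (a₁ * b₂ - a₂ * b₁) * TrivSqZeroExt.snd z) * ((a₁ + b₂) * b₂ * TrivSqZeroExt.fst w + (a₃ * b₁ - a₁ * b₃) * TrivSqZeroExt.snd w)) + a₃ * ((-((a₁ + b₂) * b₁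 * TrivSqZeroExt.fst z) + 2 * (a₁ * b₂ - a₂ * b₁) * TrivSqZeroExt.snd z) * (-((a₁ + b₂) * b₁ * TrivSqZeroExt.fst w) + 2 * (a₁ * b₂ - a₂ * b₁) * TrivSqZeroExt.snd w))) / ((a₁ + b₂) * (a₁ * b₂ - a₂ * b₁)) / ((a₁ + b₂) * (a₁ * b₂ - a₂ * b₁)))
      · ring
      · rw [div_div, div_eq_div_iff (mul_ne_zero hS hS) hS]
        linear_combination ((a₁ + b₂) * (a₁ * b₂ - a₂ * b₁)) * (
        (-(b₁*b₂^2*z.fst*w.fst) - 2*a₂*b₁*b₂*z.snd*w.fst - 2*a₂*b₁*b₂*z.fst*w.snd +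
          2*a₁*b₂^2*z.snd*w.fst + 2*a₁*b₂^2*z.fst*w.snd - 2*a₁*b₁*b₂*z.fst*w.fst -
          2*a₁*a₂*b₁*z.snd*w.fst - 2*a₁*a₂*b₁*z.fst*w.snd + 2*a₁^2*b₂*z.snd*w.fst +
          2*a₁^2*b₂*z.fst*w.snd - a₁^2*b₁*z.fst*w.fst) * hp3 +
        (a₁*z.snd*w.snd) * hΔ)
    · simp only [pmul]
      rw [hf, hsnd]
      have hS : ((a₁ + b₂) * (a₁ * b₂ - a₂ * b₁)) ≠ 0 := mul_ne_zero hs hD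
      trans ((b₁ * (((a₁ + b₂) * b₂ * TrivSqZeroExt.fst z + (a₃ * b₁ - a₁ * b₃) * TrivSqZeroExt.snd z) * ((a₁ + b₂) * b₂ * TrivSqZeroExt.fst w + (a₃ * b₁ - a₁ * b₃) * TrivSqZeroExt.snd w)) + b₂ * (((a₁ + b₂) * b₂ * TrivSqZeroExt.fst z + (a₃ * b₁ - a₁ * b₃) * TrivSqZeroExt.snd z) * (-((a₁ + b₂) * b₁ * TrivSqZeroExt.fst w) + 2 * (a₁ * b₂ - a₂ * b₁) * TrivSqZeroExt.snd w) + (-((a₁ + b₂) * b₁ * TrivSqZeroExt.fst z) + 2 * (a₁ * b₂ - a₂ * b₁) * TrivSqZeroExt.snd z) * ((a₁ + b₂) * b₂ * TrivSqZeroExt.fst w + (a₃ * b₁ - a₁ * b₃) * TrivSqZeroExt.snd w)) + b₃ * ((-((a₁ + b₂) * b₁ * TrivSqZeroExt.fst z) + 2 * (a₁ * b₂ - a₂ * b₁) * TrivSqZeroExt.snd z) * (-((a₁ + b₂) * b₁ * TrivSqZeroExt.fst w) + 2 * (a₁ * b₂ - a₂ * b₁) * TrivSqZeroExt.snd w)))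 / ((a₁ + b₂) * (a₁ * b₂ - a₂ * b₁)) / ((a₁ + b₂) * (a₁ * b₂ - a₂ * b₁)))
      · ring
      · rw [div_div, div_eq_div_iff (mul_ne_zero hS hS) hS]
        linear_combination ((a₁ + b₂) * (a₁ * b₂ - a₂ * b₁)) * (
        (-(2:ℝ)*b₁*b₂^2*z.snd*w.fst - 2*b₁*b₂^2*z.fst*w.snd + 2*a₁^2*b₁*z.snd*w.fst +
          2*a₁^2*b₁*z.fst*w.snd) * hp3 +
        ((2:ℝ)*b₁^2*b₂*z.snd*w.fst + 2*b₁^2*b₂*z.fst*w.snd + 2*a₁*b₁^2*z.snd*w.fst +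
          2*a₁*b₁^2*z.fst*w.snd) * hp4 +
        (b₁*z.snd*w.snd) * hΔ +
        (-(b₁*b₂^2*z.fst*w.fst) + 2*a₁*b₂^2*z.snd*w.fst + 2*a₁*b₂^2*z.fst*w.snd -
          2*a₁*b₁*b₂*z.fst*w.fst + 2*a₁^2*b₂*z.snd*w.fst + 2*a₁^2*b₂*z.fst*w.snd -
          a₁^2*b₁*z.fst*w.fst) * hA)
  refine ⟨E, fun x y => ?_⟩
  calc E (pmul a₁ a₂ a₃ b₁ b₂ b₃ x y)
      = E (pmul a₁ a₂ a₃ b₁ b₂ b₃ (E.symm (E x)) (E.symm (E y))) := by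
        rw [LinearEquiv.symm_apply_apply, LinearEquiv.symm_apply_apply]
    _ = E (E.symm (E x * E y)) := by rw [key]
    _ = E x * E y := E.apply_symm_apply _
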